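/- arXiv:2402.09500 — 2 statements merged into one kernel-verified Lean document; each statement's English description precedes it below -/
import Mathlib

section
/- Let T be a trait of programs, let sem(T) = {c | every code d with eval d = eval c belongs to T} be its semantic part, and let syn(T) = T \ sem(T) be its syntactic part. If sem(T) is nonempty and syn(T) is nonempty and finite, then membership in T is not a computable predicate. -/
open Nat.Partrec (Code)
open Nat.Partrec.Code

noncomputable local instance : DecidableEq Nat.Partrec.Code := Classical.decEq _

private lemma primrec_mem_list (l : List Code) : PrimrecPred (fun c => c ∈ l) := by
  induction l with
  | nil =>
      have h0 : PrimrecPred (fun _ : Code => False) := Primrec.primrecPred (Primrec.const false)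
      exact h0.of_eq (by simp)
  | cons a l ih =>
      exact ((PrimrecRel.comp Primrec.eq Primrec.id (Primrec.const a)).or ih).of_eq
        (by simp)

private lemma computablePred_of_finite {S : Set Code} (h : S.Finite) :
    ComputablePred (fun c => c ∈ S) := by
  classical
  have : PrimrecPred (fun c => c ∈ h.toFinset.toList) := primrec_mem_list _
  refine ComputablePred.computable_iff.2
    ⟨fun c => decide (c ∈ h.toFinset.toList), this.decide.to_comp, funext fun c => ?_⟩
  simp [Set.Finite.mem_toFinset]

private lemma computablePred_and {α} [Primcodable α] {p q : α → Prop}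
    (hp : ComputablePred p) (hq : ComputablePred q) :
    ComputablePred (fun a => p a ∧ q a) := by
  obtain ⟨f, hf, rfl⟩ := ComputablePred.computable_iff.1 hp
  obtain ⟨g, hg, rfl⟩ := ComputablePred.computable_iff.1 hq
  exact ComputablePred.computable_iff.2
    ⟨fun a => f a && g a, Primrec.and.to_comp.comp hf hg,
      funext fun a => by simp [Bool.and_eq_true]⟩

/-- If the semantic part of a trait `T` is nonempty and its syntactic part is
nonempty and finite, then `T` is undecidable. -/
theorem undecidable_of_sem_nonempty_syn_finite (T : Set Nat.Partrec.Code)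
    (hsem_ne : ({c : Nat.Partrec.Code | ∀ d : Nat.Partrec.Code,
        Nat.Partrec.Code.eval d = Nat.Partrec.Code.eval c → d ∈ T}).Nonempty)
    (hsyn_ne : (T \ {c : Nat.Partrec.Code | ∀ d : Nat.Partrec.Code,
        Nat.Partrec.Code.eval d = Nat.Partrec.Code.eval c → d ∈ T}).Nonempty)
    (hsyn_fin : (T \ {c : Nat.Partrec.Code | ∀ d : Nat.Partrec.Code,
        Nat.Partrec.Code.eval d = Nat.Partrec.Code.eval c → d ∈ T}).Finite) :
    ¬ ComputablePred (fun c : Nat.Partrec.Code => c ∈ T) := by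
  intro hT
  set sem : Set Code :=
    {c : Code | ∀ d : Code, eval d = eval c → d ∈ T} with hsemdef
  -- sem is computable: sem = T \ syn, syn finite
  have hsyn_comp : ComputablePred (fun c => c ∈ (T \ sem)) :=
    computablePred_of_finite hsyn_fin
  have hsem_comp : ComputablePred (fun c => c ∈ sem) := by
    have := computablePred_and hT hsyn_comp.not
    refine this.of_eq fun c => ?_
    constructor
    · rintro ⟨hcT, hns⟩
      simp only [Set.mem_diff, not_and, not_not] at hns
      exact hns hcT
    · intro hc
      exact ⟨hc c rfl, fun h => h.2 hc⟩
  -- sem respects eval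
  have hext : ∀ cf cg : Code, eval cf = eval cg → (cf ∈ sem ↔ cg ∈ sem) := by
    intro cf cg h
    constructor <;> intro hm d hd
    · exact hm d (hd.trans h.symm)
    · exact hm d (hd.trans h)
  have := (ComputablePred.rice₂ sem hext).1 hsem_comp
  rcases this with h | h
  · rw [h] at hsem_ne
    exact Set.not_nonempty_empty hsem_ne
  · obtain ⟨c, hcT, hcns⟩ := hsyn_ne
    exact hcns (h ▸ Set.mem_univ c)
end

section
/- Any nontrivial trait that is resource-bounded by a discriminating resource measure is syntactic. Precisely: let Φ : Code → ℕ → Part ℕ be a resource measure, meaning (i) for every code c and input n, Φ c n is defined iff eval c n is defined, and (ii) the predicate {(c, n, m) : Code × ℕ × ℕ | Φ c n = Part.some m} is a computable predicate. Suppose Φ is discriminating: for every code c there exists a code d with eval d = eval c such that for every input n and all values a ∈ Φ c n and b ∈ Φ d n, a < b. Let T be a trait of programs that is nontrivial (neither empty nor all codes) and Φ-bounded: there exists a total computable function ξ : ℕ → ℕ such that for every c ∈ T and every input n, there exists m ∈ Φ c n with m ≤ ξ n. Then T is syntactic: there exist a code c ∈ T and a code d with eval d = eval c and d ∉ T. 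-/
/-- Any nontrivial trait that is bounded by a discriminating resource measure
(Blum complexity measure) is syntactic. -/
theorem nontrivial_resource_bounded_is_syntactic
    (Φ : Nat.Partrec.Code → ℕ → Part ℕ)
    (hdom : ∀ (c : Nat.Partrec.Code) (n : ℕ),
      (Φ c n).Dom ↔ (Nat.Partrec.Code.eval c n).Dom)
    (hgraph : ComputablePred (fun p : Nat.Partrec.Code × ℕ × ℕ =>
      Φ p.1 p.2.1 = Part.some p.2.2))
    (hdisc : ∀ c : Nat.Partrec.Code, ∃ d : Nat.Partrec.Code,
      Nat.Partrec.Code.eval d = Nat.Partrec.Code.eval c ∧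
      ∀ n : ℕ, ∀ a ∈ Φ c n, ∀ b ∈ Φ d n, a < b)
    (T : Set Nat.Partrec.Code) (hne : T ≠ ∅) (hnuniv : T ≠ Set.univ)
    (hbdd : ∃ ξ : ℕ → ℕ, Computable ξ ∧
      ∀ c ∈ T, ∀ n : ℕ, ∃ m ∈ Φ c n, m ≤ ξ n) :
    ∃ c ∈ T, ∃ d : Nat.Partrec.Code,
      Nat.Partrec.Code.eval d = Nat.Partrec.Code.eval c ∧ d ∉ T := by
  by_contra h
  push_neg at h
  obtain ⟨ξ, hξc, hξ⟩ := hbdd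
  obtain ⟨c₀, hc₀⟩ := Set.nonempty_iff_ne_empty.mpr hne
  -- iterate the discriminator
  choose g hgeq hglt using hdisc
  set f : ℕ → Nat.Partrec.Code := fun k => g^[k] c₀ with hf
  have hfeq : ∀ k, Nat.Partrec.Code.eval (f k) = Nat.Partrec.Code.eval c₀ := by
    intro k
    induction k with
    | zero => rfl
    | succ k ih =>
      have : f (k + 1) = g (f k) := Function.iterate_succ_apply' g k c₀
      rw [this, hgeq, ih]
  have hfT : ∀ k, f k ∈ T := fun k => h c₀ hc₀ (f k) (hfeq k)
  choose m hm hle using fun k => hξ (f k) (hfT k) 0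
  have hmono : ∀ k, m k < m (k + 1) := by
    intro k
    have hstep : f (k + 1) = g (f k) := Function.iterate_succ_apply' g k c₀
    have := hglt (f k) 0 (m k) (hm k) (m (k + 1)) (hstep ▸ hm (k + 1))
    exact this
  have hge : ∀ k, k ≤ m k := by
    intro k
    induction k with
    | zero => exact Nat.zero_le _
    | succ k ih => exact Nat.lt_of_le_of_lt ih (hmono k)
  have := hge (ξ 0 + 1)
  have := hle (ξ 0 + 1)
  omega
end
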